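/- Suppose F : (0,∞)² → (0,∞) satisfies the monotonicity property β* Q_F^{β(ρ),β(σ)} β ≤ Q_F^{ρ,σ} for all CPTP maps β and positive definite ρ,σ, and additionally λF(λx, λy) ≤ F(x,y) for all λ ∈ [0,1] and x,y > 0. Then the generalized monotone metric γ^F_{ρ,σ}(a,a) := ⟨a, Q_F^{ρ,σ}(a)⟩_{HS} is jointly convex in (ρ, σ, a): γ^F_{λρ₁+(1−λ)ρ₂, λσ₁+(1−λ)σ₂}(λa₁+(1−λ)a₂, ·) ≤ λγ^F_{ρ₁,σ₁}(a₁,a₁) + (1−λ)γ^F_{ρ₂,σ₂}(a₂,a₂). -/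

import Mathlib

open Matrix
open scoped ComplexOrder

/-- The spectral projection of a Hermitian matrix onto the `i`-th eigenvector. -/
noncomputable def specProj {n : ℕ} {A : Matrix (Fin n) (Fin n) ℂ} (hA : A.IsHermitian)
    (i : Fin n) : Matrix (Fin n) (Fin n) ℂ :=
  (hA.eigenvectorUnitary : Matrix (Fin n) (Fin n) ℂ) *
    Matrix.diagonal (fun k => if k = i then (1 : ℂ) else 0) *
    star (hA.eigenvectorUnitary : Matrix (Fin n) (Fin n) ℂ)

/-- The Schur multiplier `Q_F^{ρ,σ}(y) = ∑_{i,j} F(sᵢ,tⱼ) pᵢ y qⱼ` associated with the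
spectral decompositions of the Hermitian matrices `ρ`, `σ` (junk value `0` otherwise). -/
noncomputable def QF {n : ℕ} (F : ℝ → ℝ → ℝ) (ρ σ : Matrix (Fin n) (Fin n) ℂ)
    (y : Matrix (Fin n) (Fin n) ℂ) : Matrix (Fin n) (Fin n) ℂ :=
  if h : ρ.IsHermitian ∧ σ.IsHermitian then
    ∑ i, ∑ j, ((F (h.1.eigenvalues i) (h.2.eigenvalues j) : ℝ) : ℂ) •
      (specProj h.1 i * y * specProj h.2 j)
  else 0

/-- The amplification `id_{M_k} ⊗ β` of a linear map `β` on matrix algebras. -/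
def amplify {n m : ℕ} (β : Matrix (Fin n) (Fin n) ℂ →ₗ[ℂ] Matrix (Fin m) (Fin m) ℂ) (k : ℕ)
    (x : Matrix (Fin k × Fin n) (Fin k × Fin n) ℂ) :
    Matrix (Fin k × Fin m) (Fin k × Fin m) ℂ :=
  Matrix.of fun p q => β (Matrix.of fun a b => x (p.1, a) (q.1, b)) p.2 q.2

/-- A linear map between matrix algebras is CPTP if it is trace preserving and all its
amplifications preserve positive semidefiniteness. -/
def IsCPTP {n m : ℕ} (β : Matrix (Fin n) (Fin n) ℂ →ₗ[ℂ] Matrix (Fin m) (Fin m) ℂ) : Prop :=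
  (∀ x, (β x).trace = x.trace) ∧
  ∀ (k : ℕ) (x : Matrix (Fin k × Fin n) (Fin k × Fin n) ℂ), x.PosSemidef →
    (amplify β k x).PosSemidef

/-- The generalized monotone metric `γ^F_{ρ,σ}(a,a) = ⟨a, Q_F^{ρ,σ}(a)⟩_{HS}`. -/
noncomputable def gammaF {n : ℕ} (F : ℝ → ℝ → ℝ) (ρ σ a : Matrix (Fin n) (Fin n) ℂ) : ℝ :=
  ((star a * QF F ρ σ a).trace).re

namespace GammaAux

open Polynomial

variable {N : ℕ}

noncomputable def projU (u : Matrix (Fin N) (Fin N) ℂ) (i : Fin N) : Matrix (Fin N) (Fin N) ℂ :=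
  u * Matrix.diagonal (fun k => if k = i then (1 : ℂ) else 0) * star u

lemma sum_smul_projU (u : Matrix (Fin N) (Fin N) ℂ) (c : Fin N → ℂ) :
    ∑ i, c i • projU u i = u * Matrix.diagonal c * star u := by
  have : ∑ i, c i • Matrix.diagonal (fun k => if k = i then (1 : ℂ) else 0) =
      Matrix.diagonal c := by
    ext a b
    simp only [Finset.sum_apply, Matrix.sum_apply, Matrix.smul_apply, Matrix.diagonal_apply]
    by_cases hab : a = b
    · subst hab
      simp [Finset.sum_ite_eq' Finset.univ a c]
    · simp [hab]
  calc ∑ i, c i • projU u i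
      = u * (∑ i, c i • Matrix.diagonal (fun k => if k = i then (1 : ℂ) else 0)) * star u := by
        simp [projU, Finset.mul_sum, Finset.sum_mul, Matrix.mul_smul, Matrix.smul_mul]
    _ = u * Matrix.diagonal c * star u := by rw [this]

lemma conj_pow (u D : Matrix (Fin N) (Fin N) ℂ) (hu : u ∈ Matrix.unitaryGroup (Fin N) ℂ)
    (k : ℕ) : (u * D * star u) ^ k = u * D ^ k * star u := by
  induction k with
  | zero => simp [Matrix.mul_one, (Matrix.mem_unitaryGroup_iff).mp hu]
  | succ k ih =>
      rw [pow_succ, ih, pow_succ]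
      have h1 : star u * u = 1 := (Matrix.mem_unitaryGroup_iff').mp hu
      calc u * D ^ k * star u * (u * D * star u)
          = u * D ^ k * (star u * u) * D * star u := by
            simp only [Matrix.mul_assoc]
        _ = u * (D ^ k * D) * star u := by
            rw [h1]; simp only [Matrix.mul_assoc, Matrix.mul_one, Matrix.one_mul]

lemma aeval_conj (u D : Matrix (Fin N) (Fin N) ℂ) (hu : u ∈ Matrix.unitaryGroup (Fin N) ℂ)
    (P : ℂ[X]) : aeval (u * D * star u) P = u * aeval D P * star u := by
  induction P using Polynomial.induction_on' with
  | add p q hp hq => simp [hp, hq, Matrix.mul_add, Matrix.add_mul]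
  | monomial k a =>
      rw [aeval_monomial, aeval_monomial, conj_pow u D hu k]
      have : (algebraMap ℂ (Matrix (Fin N) (Fin N) ℂ)) a = a • 1 := by
        simp [Algebra.algebraMap_eq_smul_one]
      rw [this]
      simp only [smul_mul_assoc, one_mul]
      rw [Matrix.mul_smul, Matrix.smul_mul]

lemma aeval_diagonal (d : Fin N → ℂ) (P : ℂ[X]) :
    aeval (Matrix.diagonal d) P = Matrix.diagonal (fun i => P.eval (d i)) := by
  have h1 : aeval (Matrix.diagonal d) P =
      (Matrix.diagonalAlgHom ℂ : (Fin N → ℂ) →ₐ[ℂ] Matrix (Fin N) (Fin N) ℂ) (aeval d P) := by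
    have := aeval_algHom_apply
      (Matrix.diagonalAlgHom ℂ : (Fin N → ℂ) →ₐ[ℂ] Matrix (Fin N) (Fin N) ℂ) d P
    simpa using this
  rw [h1]
  have h2 : aeval d P = fun i => P.eval (d i) := by
    funext i
    have := aeval_algHom_apply (Pi.evalAlgHom ℂ (fun _ : Fin N => ℂ) i) d P
    simp only [Pi.evalAlgHom_apply] at this
    rw [← this, Polynomial.coe_aeval_eq_eval]
  rw [h2]; rfl

/-- Independence of the functional calculus from the chosen spectral decomposition. -/
lemma indep (u w : Matrix (Fin N) (Fin N) ℂ) (hu : u ∈ Matrix.unitaryGroup (Fin N) ℂ)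
    (hw : w ∈ Matrix.unitaryGroup (Fin N) ℂ) (s μ : Fin N → ℝ)
    (h : u * Matrix.diagonal (fun i => (s i : ℂ)) * star u =
         w * Matrix.diagonal (fun i => (μ i : ℂ)) * star w)
    (g : ℝ → ℂ) :
    ∑ i, g (s i) • projU u i = ∑ i, g (μ i) • projU w i := by
  classical
  set T : Finset ℂ := (Finset.image (fun i => ((s i : ℂ))) Finset.univ) ∪
      (Finset.image (fun i => ((μ i : ℂ))) Finset.univ) with hT
  set P : ℂ[X] := Lagrange.interpolate T id (fun z => g z.re) with hP
  have hinj : Set.InjOn (id : ℂ → ℂ) T := Function.injective_id.injOn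
  have hs : ∀ i, P.eval ((s i : ℂ)) = g (s i) := by
    intro i
    have hm : ((s i : ℂ)) ∈ T := by simp [hT]
    have := Lagrange.eval_interpolate_at_node (v := id) (r := fun z => g z.re) hinj hm
    simpa [hP] using this
  have hμ : ∀ i, P.eval ((μ i : ℂ)) = g (μ i) := by
    intro i
    have hm : ((μ i : ℂ)) ∈ T := by simp [hT]
    have := Lagrange.eval_interpolate_at_node (v := id) (r := fun z => g z.re) hinj hm
    simpa [hP] using this
  calc ∑ i, g (s i) • projU u i
      = u * Matrix.diagonal (fun i => g (s i)) * star u := sum_smul_projU u _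
    _ = u * Matrix.diagonal (fun i => P.eval ((s i : ℂ))) * star u := by
        simp only [hs]
    _ = aeval (u * Matrix.diagonal (fun i => ((s i : ℂ))) * star u) P := by
        rw [aeval_conj u _ hu, aeval_diagonal]
    _ = aeval (w * Matrix.diagonal (fun i => ((μ i : ℂ))) * star w) P := by rw [h]
    _ = w * Matrix.diagonal (fun i => P.eval ((μ i : ℂ))) * star w := by
        rw [aeval_conj w _ hw, aeval_diagonal]
    _ = w * Matrix.diagonal (fun i => g (μ i)) * star w := by
        simp only [hμ]
    _ = ∑ i, g (μ i) • projU w i := (sum_smul_projU w _).symm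

lemma trace_single (u w a : Matrix (Fin N) (Fin N) ℂ) (i j : Fin N) :
    (star a * (projU u i * a * projU w j)).trace =
      (Complex.normSq ((star u * a * w) i j) : ℂ) := by
  set D : Fin N → Matrix (Fin N) (Fin N) ℂ :=
    fun i => Matrix.diagonal (fun k => if k = i then (1 : ℂ) else 0) with hD
  set b : Matrix (Fin N) (Fin N) ℂ := star u * a * w with hb
  have h1 : star a * (projU u i * a * projU w j) =
      (star a * u * D i * (star u * (a * (w * D j)))) * star w := by
    simp only [projU, hD, Matrix.mul_assoc]
  rw [h1, Matrix.trace_mul_comm]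
  have h2 : star w * (star a * u * D i * (star u * (a * (w * D j)))) =
      star b * (D i * (b * D j)) := by
    rw [hb]
    simp only [StarMul.star_mul, star_star, Matrix.mul_assoc]
  rw [h2]
  have h3 : ∀ k, (star b * (D i * (b * D j))) k k =
      if k = j then star b k i * b i k else 0 := by
    intro k
    rw [Matrix.mul_apply]
    simp only [hD, Matrix.diagonal_mul, Matrix.mul_diagonal]
    simp [ite_mul, mul_ite, mul_one, mul_zero, Finset.sum_ite_eq, mul_assoc]
  have h4 : (star b * (D i * (b * D j))).trace = star b j i * b i j := by
    rw [Matrix.trace]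
    simp only [Matrix.diag_apply, h3]
    simp [Finset.sum_ite_eq']
  rw [h4]
  rw [Matrix.star_apply, Complex.star_def, ← Complex.normSq_eq_conj_mul_self]

lemma specProj_eq {A : Matrix (Fin N) (Fin N) ℂ} (hA : A.IsHermitian) (i : Fin N) :
    specProj hA i = projU (hA.eigenvectorUnitary : Matrix (Fin N) (Fin N) ℂ) i := rfl

lemma spectral_decomp {A : Matrix (Fin N) (Fin N) ℂ} (hA : A.IsHermitian) :
    A = (hA.eigenvectorUnitary : Matrix (Fin N) (Fin N) ℂ) *
        Matrix.diagonal (fun i => ((hA.eigenvalues i : ℝ) : ℂ)) *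
        star (hA.eigenvectorUnitary : Matrix (Fin N) (Fin N) ℂ) := by
  convert hA.spectral_theorem using 2
  rw [Unitary.conjStarAlgAut_apply]; rfl

/-- `gammaF` computed from an arbitrary unitary diagonalization of `ρ` and `σ`. -/
lemma gammaF_decomp (F : ℝ → ℝ → ℝ) {ρ σ : Matrix (Fin N) (Fin N) ℂ}
    (hρ : ρ.IsHermitian) (hσ : σ.IsHermitian)
    (u w : Matrix (Fin N) (Fin N) ℂ)
    (hu : u ∈ Matrix.unitaryGroup (Fin N) ℂ) (hw : w ∈ Matrix.unitaryGroup (Fin N) ℂ)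
    (s t : Fin N → ℝ)
    (hρd : ρ = u * Matrix.diagonal (fun i => ((s i : ℝ) : ℂ)) * star u)
    (hσd : σ = w * Matrix.diagonal (fun i => ((t i : ℝ) : ℂ)) * star w)
    (a : Matrix (Fin N) (Fin N) ℂ) :
    gammaF F ρ σ a =
      ∑ i, ∑ j, F (s i) (t j) * Complex.normSq ((star u * a * w) i j) := by
  have h : ρ.IsHermitian ∧ σ.IsHermitian := ⟨hρ, hσ⟩
  set uE : Matrix (Fin N) (Fin N) ℂ := (hρ.eigenvectorUnitary : Matrix (Fin N) (Fin N) ℂ)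
  set wE : Matrix (Fin N) (Fin N) ℂ := (hσ.eigenvectorUnitary : Matrix (Fin N) (Fin N) ℂ)
  have hρd' : uE * Matrix.diagonal (fun i => ((hρ.eigenvalues i : ℝ) : ℂ)) * star uE =
      u * Matrix.diagonal (fun i => ((s i : ℝ) : ℂ)) * star u := by
    rw [← spectral_decomp hρ, ← hρd]
  have hσd' : wE * Matrix.diagonal (fun i => ((hσ.eigenvalues i : ℝ) : ℂ)) * star wE =
      w * Matrix.diagonal (fun i => ((t i : ℝ) : ℂ)) * star w := by
    rw [← spectral_decomp hσ, ← hσd]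
  have key : ∑ i, ∑ j, ((F (hρ.eigenvalues i) (hσ.eigenvalues j) : ℝ) : ℂ) •
        (projU uE i * a * projU wE j) =
      ∑ i, ∑ j, ((F (s i) (t j) : ℝ) : ℂ) • (projU u i * a * projU w j) := by
    rw [Finset.sum_comm]
    have step1 : ∀ j : Fin N,
        ∑ i, ((F (hρ.eigenvalues i) (hσ.eigenvalues j) : ℝ) : ℂ) •
            (projU uE i * a * projU wE j) =
        ∑ i, ((F (s i) (hσ.eigenvalues j) : ℝ) : ℂ) • (projU u i * a * projU wE j) := by
      intro j
      have h1 : ∀ (u' : Matrix (Fin N) (Fin N) ℂ) (c : Fin N → ℂ),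
          ∑ i, c i • (projU u' i * a * projU wE j) =
            (∑ i, c i • projU u' i) * (a * projU wE j) := by
        intro u' c
        rw [Finset.sum_mul]
        congr 1; funext i
        rw [Matrix.smul_mul, Matrix.mul_assoc]
      rw [h1, h1, indep uE u hρ.eigenvectorUnitary.2 hu _ _ hρd'
        (fun x => ((F x (hσ.eigenvalues j) : ℝ) : ℂ))]
    rw [Finset.sum_congr rfl (fun j _ => step1 j), Finset.sum_comm]
    have step2 : ∀ i : Fin N,
        ∑ j, ((F (s i) (hσ.eigenvalues j) : ℝ) : ℂ) • (projU u i * a * projU wE j) =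
        ∑ j, ((F (s i) (t j) : ℝ) : ℂ) • (projU u i * a * projU w j) := by
      intro i
      have h2 : ∀ (w' : Matrix (Fin N) (Fin N) ℂ) (c : Fin N → ℂ),
          ∑ j, c j • (projU u i * a * projU w' j) =
            (projU u i * a) * (∑ j, c j • projU w' j) := by
        intro w' c
        rw [Finset.mul_sum]
        congr 1; funext j
        rw [Matrix.mul_smul, Matrix.mul_assoc]
      rw [h2, h2, indep wE w hσ.eigenvectorUnitary.2 hw _ _ hσd'
        (fun x => ((F (s i) x : ℝ) : ℂ))]
    exact Finset.sum_congr rfl (fun i _ => step2 i)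
  rw [gammaF, QF, dif_pos h]
  have : (∑ i, ∑ j, ((F (h.1.eigenvalues i) (h.2.eigenvalues j) : ℝ) : ℂ) •
      (specProj h.1 i * a * specProj h.2 j)) =
      ∑ i, ∑ j, ((F (s i) (t j) : ℝ) : ℂ) • (projU u i * a * projU w j) := key
  rw [this]
  rw [Finset.mul_sum]
  simp only [Finset.mul_sum, Matrix.mul_smul, Matrix.trace_sum, Matrix.trace_smul,
    trace_single, Complex.re_sum]
  refine Finset.sum_congr rfl fun i _ => Finset.sum_congr rfl fun j _ => ?_
  rw [smul_eq_mul, ← Complex.ofReal_mul, Complex.ofReal_re]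

lemma smul_hermitian {ρ : Matrix (Fin N) (Fin N) ℂ} (hρ : ρ.IsHermitian) (lam : ℝ) :
    ((lam : ℂ) • ρ).IsHermitian := by
  unfold Matrix.IsHermitian
  rw [Matrix.conjTranspose_smul, Complex.star_def, Complex.conj_ofReal, hρ.eq]

lemma posDef_smul {ρ : Matrix (Fin N) (Fin N) ℂ} (h : ρ.PosDef) {l : ℝ} (hl : 0 < l) :
    ((l : ℂ) • ρ).PosDef := by
  refine posDef_iff_dotProduct_mulVec.mpr ⟨smul_hermitian h.1 l, fun z hz => ?_⟩
  rw [Matrix.smul_mulVec, dotProduct_smul, smul_eq_mul]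
  have hlc : (0 : ℂ) < (l : ℂ) := by
    rw [Complex.zero_lt_real]
    exact hl
  exact mul_pos hlc (h.dotProduct_mulVec_pos hz)

lemma smul_decomp {ρ : Matrix (Fin N) (Fin N) ℂ} (hρ : ρ.IsHermitian) (lam : ℝ) :
    (lam : ℂ) • ρ = (hρ.eigenvectorUnitary : Matrix (Fin N) (Fin N) ℂ) *
      Matrix.diagonal (fun i => ((lam * hρ.eigenvalues i : ℝ) : ℂ)) *
      star (hρ.eigenvectorUnitary : Matrix (Fin N) (Fin N) ℂ) := by
  have h0 := spectral_decomp hρ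
  calc (lam : ℂ) • ρ
      = (lam : ℂ) • ((hρ.eigenvectorUnitary : Matrix (Fin N) (Fin N) ℂ) *
          Matrix.diagonal (fun i => ((hρ.eigenvalues i : ℝ) : ℂ)) *
          star (hρ.eigenvectorUnitary : Matrix (Fin N) (Fin N) ℂ)) := by rw [← h0]
    _ = (hρ.eigenvectorUnitary : Matrix (Fin N) (Fin N) ℂ) *
          ((lam : ℂ) • Matrix.diagonal (fun i => ((hρ.eigenvalues i : ℝ) : ℂ))) *
          star (hρ.eigenvectorUnitary : Matrix (Fin N) (Fin N) ℂ) := by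
        rw [Matrix.mul_smul, Matrix.smul_mul]
    _ = _ := by
        congr 1
        congr 1
        ext i j
        rw [Matrix.smul_apply, Matrix.diagonal_apply, Matrix.diagonal_apply]
        split
        · simp [Complex.ofReal_mul]
        · simp

lemma gammaF_smul_le (F : ℝ → ℝ → ℝ)
    (hhom : ∀ lam ∈ Set.Icc (0 : ℝ) 1, ∀ x > (0 : ℝ), ∀ y > (0 : ℝ),
      lam * F (lam * x) (lam * y) ≤ F x y)
    {lam : ℝ} (h0 : 0 ≤ lam) (h1 : lam ≤ 1)
    {ρ σ : Matrix (Fin N) (Fin N) ℂ} (hρ : ρ.PosDef) (hσ : σ.PosDef)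
    (a : Matrix (Fin N) (Fin N) ℂ) :
    gammaF F ((lam : ℂ) • ρ) ((lam : ℂ) • σ) ((lam : ℂ) • a) ≤ lam * gammaF F ρ σ a := by
  set u : Matrix (Fin N) (Fin N) ℂ := (hρ.1.eigenvectorUnitary : Matrix (Fin N) (Fin N) ℂ)
  set w : Matrix (Fin N) (Fin N) ℂ := (hσ.1.eigenvectorUnitary : Matrix (Fin N) (Fin N) ℂ)
  have hL := gammaF_decomp F (smul_hermitian hρ.1 lam) (smul_hermitian hσ.1 lam) u w
    hρ.1.eigenvectorUnitary.2 hσ.1.eigenvectorUnitary.2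
    (fun i => lam * hρ.1.eigenvalues i) (fun j => lam * hσ.1.eigenvalues j)
    (smul_decomp hρ.1 lam) (smul_decomp hσ.1 lam) ((lam : ℂ) • a)
  have hR := gammaF_decomp F hρ.1 hσ.1 u w
    hρ.1.eigenvectorUnitary.2 hσ.1.eigenvectorUnitary.2
    hρ.1.eigenvalues hσ.1.eigenvalues (spectral_decomp hρ.1) (spectral_decomp hσ.1) a
  rw [hL, hR, Finset.mul_sum]
  have hb : ∀ i j, (star u * ((lam : ℂ) • a) * w) i j = (lam : ℂ) * (star u * a * w) i j := by
    intro i j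
    rw [Matrix.mul_smul, Matrix.smul_mul, Matrix.smul_apply, smul_eq_mul]
  refine Finset.sum_le_sum fun i _ => ?_
  rw [Finset.mul_sum]
  refine Finset.sum_le_sum fun j _ => ?_
  rw [hb i j, Complex.normSq_mul, Complex.normSq_ofReal]
  have hF := hhom lam ⟨h0, h1⟩ (hρ.1.eigenvalues i) (hρ.eigenvalues_pos i)
    (hσ.1.eigenvalues j) (hσ.eigenvalues_pos j)
  have hn : 0 ≤ Complex.normSq ((star u * a * w) i j) := Complex.normSq_nonneg _
  calc F (lam * hρ.1.eigenvalues i) (lam * hσ.1.eigenvalues j) *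
        (lam * lam * Complex.normSq ((star u * a * w) i j))
      = (lam * (lam * F (lam * hρ.1.eigenvalues i) (lam * hσ.1.eigenvalues j))) *
          Complex.normSq ((star u * a * w) i j) := by ring
    _ ≤ (lam * F (hρ.1.eigenvalues i) (hσ.1.eigenvalues j)) *
          Complex.normSq ((star u * a * w) i j) := by
        apply mul_le_mul_of_nonneg_right _ hn
        exact mul_le_mul_of_nonneg_left hF h0
    _ = lam * (F (hρ.1.eigenvalues i) (hσ.1.eigenvalues j) *
          Complex.normSq ((star u * a * w) i j)) := by ring

section Blocks

variable {n : ℕ}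

def eqv (n : ℕ) : Fin (2*n) ≃ Fin n × Fin 2 :=
  finProdFinEquiv.symm.trans (Equiv.prodComm (Fin 2) (Fin n))

def bd (d : Fin 2 → Matrix (Fin n) (Fin n) ℂ) : Matrix (Fin (2*n)) (Fin (2*n)) ℂ :=
  (blockDiagonal d).submatrix (eqv n) (eqv n)

lemma bd_mul (d d' : Fin 2 → Matrix (Fin n) (Fin n) ℂ) :
    bd d * bd d' = bd (fun c => d c * d' c) := by
  rw [bd, bd, bd, submatrix_mul_equiv, blockDiagonal_mul]

lemma bd_star (d : Fin 2 → Matrix (Fin n) (Fin n) ℂ) :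
    star (bd d) = bd (fun c => star (d c)) := by
  show (bd d)ᴴ = _
  rw [bd, conjTranspose_submatrix, bd]
  rw [blockDiagonal_conjTranspose]
  simp [Matrix.star_eq_conjTranspose]

lemma bd_one : bd (fun _ => (1 : Matrix (Fin n) (Fin n) ℂ)) = 1 := by
  rw [bd]
  rw [show (fun _ : Fin 2 => (1 : Matrix (Fin n) (Fin n) ℂ)) = 1 from rfl, blockDiagonal_one,
    submatrix_one_equiv]

lemma bd_diagonal (g : Fin 2 → Fin n → ℂ) :
    bd (fun c => Matrix.diagonal (g c)) =
      Matrix.diagonal (fun p => g ((eqv n) p).2 ((eqv n) p).1) := by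
  rw [bd, blockDiagonal_diagonal, submatrix_diagonal _ _ (eqv n).injective]
  rfl

lemma bd_apply (d : Fin 2 → Matrix (Fin n) (Fin n) ℂ) (p q : Fin (2*n)) :
    bd d p q = if ((eqv n) p).2 = ((eqv n) q).2
      then d ((eqv n) p).2 ((eqv n) p).1 ((eqv n) q).1 else 0 := by
  rw [bd, submatrix_apply, blockDiagonal_apply]

lemma bd_unitary {d : Fin 2 → Matrix (Fin n) (Fin n) ℂ}
    (hd : ∀ c, d c ∈ Matrix.unitaryGroup (Fin n) ℂ) :
    bd d ∈ Matrix.unitaryGroup (Fin (2*n)) ℂ := by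
  rw [Matrix.mem_unitaryGroup_iff]
  rw [bd_star, bd_mul]
  rw [show (fun c => d c * star (d c)) = fun _ : Fin 2 => (1 : Matrix (Fin n) (Fin n) ℂ) from
    funext fun c => (Matrix.mem_unitaryGroup_iff).mp (hd c), bd_one]

lemma bd_hermitian {d : Fin 2 → Matrix (Fin n) (Fin n) ℂ}
    (hd : ∀ c, (d c).IsHermitian) : (bd d).IsHermitian := by
  show (bd d)ᴴ = bd d
  have : (bd d)ᴴ = star (bd d) := rfl
  rw [this, bd_star, show (fun c => star (d c)) = d from funext fun c => hd c]

lemma posDef_blockDiagonal {d : Fin 2 → Matrix (Fin n) (Fin n) ℂ}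
    (hd : ∀ c, (d c).PosDef) : (blockDiagonal d).PosDef := by
  rw [posDef_iff_dotProduct_mulVec]
  constructor
  · show (blockDiagonal d)ᴴ = blockDiagonal d
    rw [blockDiagonal_conjTranspose,
      show (fun k => (d k)ᴴ) = d from funext fun c => (hd c).1]
  · intro z hz
    have expand : dotProduct (star z) (blockDiagonal d *ᵥ z) =
        ∑ c, dotProduct (star (fun i => z (i, c))) (d c *ᵥ (fun i => z (i, c))) := by
      simp only [dotProduct, mulVec, Fintype.sum_prod_type, blockDiagonal_apply,
        Pi.star_apply, ite_mul, zero_mul, Finset.sum_ite_eq, Finset.mem_univ, if_true]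
      rw [Finset.sum_comm]
    rw [expand]
    have hnz : ∃ c, (fun i => z (i, c)) ≠ 0 := by
      by_contra hcon
      push_neg at hcon
      apply hz
      funext p
      have := congrFun (hcon p.2) p.1
      simpa using this
    obtain ⟨c₀, hc₀⟩ := hnz
    have hpos : 0 < dotProduct (star (fun i => z (i, c₀))) (d c₀ *ᵥ (fun i => z (i, c₀))) :=
      (hd c₀).dotProduct_mulVec_pos hc₀
    refine Finset.sum_pos' (fun c _ => ((hd c).posSemidef).dotProduct_mulVec_nonneg _) ⟨c₀, Finset.mem_univ _, hpos⟩

lemma posDef_submatrix_equiv {m k : Type*} [Fintype m] [DecidableEq m] [Fintype k]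
    [DecidableEq k] {M : Matrix m m ℂ}
    (e : k ≃ m) (h : M.PosDef) : (M.submatrix e e).PosDef := by
  rw [posDef_iff_dotProduct_mulVec]
  constructor
  · exact h.1.submatrix e
  · intro z hz
    have h1 : (M.submatrix (e : k → m) (e : k → m)) *ᵥ z =
        (M *ᵥ (z ∘ e.symm)) ∘ e := by
      rw [submatrix_mulVec_equiv]
    rw [h1]
    have h2 : dotProduct (star z) ((M *ᵥ (z ∘ e.symm)) ∘ e) =
        dotProduct (star (z ∘ e.symm)) (M *ᵥ (z ∘ e.symm)) := by
      rw [dotProduct, dotProduct, ← Equiv.sum_comp e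
        (fun q => star (z ∘ e.symm) q * (M *ᵥ (z ∘ e.symm)) q)]
      simp
    rw [h2]
    apply h.dotProduct_mulVec_pos
    intro hcon
    apply hz
    funext p
    have := congrFun hcon (e p)
    simpa using this

lemma posDef_bd {d : Fin 2 → Matrix (Fin n) (Fin n) ℂ}
    (hd : ∀ c, (d c).PosDef) : (bd d).PosDef :=
  posDef_submatrix_equiv (eqv n) (posDef_blockDiagonal hd)

noncomputable def beta (n : ℕ) :
    Matrix (Fin (2*n)) (Fin (2*n)) ℂ →ₗ[ℂ] Matrix (Fin n) (Fin n) ℂ where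
  toFun x := Matrix.of fun i j => ∑ c : Fin 2, x ((eqv n).symm (i, c)) ((eqv n).symm (j, c))
  map_add' x y := by
    ext i j
    simp [Finset.sum_add_distrib]
  map_smul' r x := by
    ext i j
    simp [Finset.mul_sum, mul_add]

lemma beta_apply (x : Matrix (Fin (2*n)) (Fin (2*n)) ℂ) (i j : Fin n) :
    beta n x i j = ∑ c : Fin 2, x ((eqv n).symm (i, c)) ((eqv n).symm (j, c)) := rfl

lemma beta_bd (d : Fin 2 → Matrix (Fin n) (Fin n) ℂ) :
    beta n (bd d) = d 0 + d 1 := by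
  ext i j
  rw [beta_apply]
  have : ∀ c : Fin 2, bd d ((eqv n).symm (i, c)) ((eqv n).symm (j, c)) = d c i j := by
    intro c
    rw [bd, submatrix_apply, Equiv.apply_symm_apply, Equiv.apply_symm_apply,
      blockDiagonal_apply_eq]
  rw [Finset.sum_congr rfl (fun c _ => this c), Fin.sum_univ_two]
  rfl

lemma beta_trace (x : Matrix (Fin (2*n)) (Fin (2*n)) ℂ) :
    (beta n x).trace = x.trace := by
  rw [Matrix.trace, Matrix.trace]
  have : ∀ i, (beta n x).diag i = ∑ c : Fin 2, x ((eqv n).symm (i, c)) ((eqv n).symm (i, c)) :=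
    fun i => beta_apply x i i
  rw [Finset.sum_congr rfl (fun i _ => this i)]
  have hps : ∑ z : Fin n × Fin 2, x ((eqv n).symm z) ((eqv n).symm z) =
      ∑ i : Fin n, ∑ c : Fin 2, x ((eqv n).symm (i, c)) ((eqv n).symm (i, c)) :=
    Fintype.sum_prod_type _
  rw [← hps]
  rw [Equiv.sum_comp (eqv n).symm (fun p => x p p)]
  rfl

/-- The isometry picking out block `c`. -/
def Vmat (n k : ℕ) (c : Fin 2) : Matrix (Fin k × Fin (2*n)) (Fin k × Fin n) ℂ :=
  Matrix.of fun R P => if R = (P.1, (eqv n).symm (P.2, c)) then 1 else 0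

lemma amplify_beta_eq (k : ℕ) (x : Matrix (Fin k × Fin (2*n)) (Fin k × Fin (2*n)) ℂ) :
    amplify (beta n) k x = ∑ c : Fin 2, (Vmat n k c)ᴴ * x * Vmat n k c := by
  ext P Q
  have hPQ : ∀ c, ((Vmat n k c)ᴴ * x * Vmat n k c) P Q =
      x (P.1, (eqv n).symm (P.2, c)) (Q.1, (eqv n).symm (Q.2, c)) := by
    intro c
    have h1 : (x * Vmat n k c) = Matrix.of
        (fun R Q => x R (Q.1, (eqv n).symm (Q.2, c))) := by
      ext R Q'
      rw [Matrix.mul_apply]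
      simp [Vmat, mul_ite, Finset.sum_ite_eq']
    rw [Matrix.mul_assoc, h1, Matrix.mul_apply]
    simp [Vmat, conjTranspose_apply, ite_mul, Finset.sum_ite_eq]
  rw [Matrix.sum_apply]
  rw [Finset.sum_congr rfl (fun c _ => hPQ c)]
  rfl

lemma isCPTP_beta : IsCPTP (beta n) := by
  constructor
  · exact fun x => beta_trace x
  · intro k x hx
    rw [amplify_beta_eq]
    have h0 : ((Vmat n k 0)ᴴ * x * Vmat n k 0).PosSemidef :=
      hx.conjTranspose_mul_mul_same _
    have h1 : ((Vmat n k 1)ᴴ * x * Vmat n k 1).PosSemidef :=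
      hx.conjTranspose_mul_mul_same _
    rw [Fin.sum_univ_two]
    exact h0.add h1

/-- Additivity of `gammaF` over block diagonal matrices. -/
lemma gammaF_bd (F : ℝ → ℝ → ℝ) (dρ dσ da : Fin 2 → Matrix (Fin n) (Fin n) ℂ)
    (hρ : ∀ c, (dρ c).IsHermitian) (hσ : ∀ c, (dσ c).IsHermitian) :
    gammaF F (bd dρ) (bd dσ) (bd da) = ∑ c, gammaF F (dρ c) (dσ c) (da c) := by
  set u : Fin 2 → Matrix (Fin n) (Fin n) ℂ :=
    fun c => ((hρ c).eigenvectorUnitary : Matrix (Fin n) (Fin n) ℂ) with hu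
  set w : Fin 2 → Matrix (Fin n) (Fin n) ℂ :=
    fun c => ((hσ c).eigenvectorUnitary : Matrix (Fin n) (Fin n) ℂ) with hw
  set U : Matrix (Fin (2*n)) (Fin (2*n)) ℂ := bd u with hU
  set W : Matrix (Fin (2*n)) (Fin (2*n)) ℂ := bd w with hW
  have hUu : U ∈ Matrix.unitaryGroup (Fin (2*n)) ℂ :=
    bd_unitary (fun c => (hρ c).eigenvectorUnitary.2)
  have hWu : W ∈ Matrix.unitaryGroup (Fin (2*n)) ℂ :=
    bd_unitary (fun c => (hσ c).eigenvectorUnitary.2)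
  set μ : Fin (2*n) → ℝ := fun p => (hρ ((eqv n) p).2).eigenvalues ((eqv n) p).1 with hμ
  set ν : Fin (2*n) → ℝ := fun p => (hσ ((eqv n) p).2).eigenvalues ((eqv n) p).1 with hν
  have hρdec : bd dρ = U * Matrix.diagonal (fun p => ((μ p : ℝ) : ℂ)) * star U := by
    rw [hU, bd_star]
    have hdg : Matrix.diagonal (fun p => ((μ p : ℝ) : ℂ)) =
        bd (fun c => Matrix.diagonal (fun i => (((hρ c).eigenvalues i : ℝ) : ℂ))) := by
      rw [bd_diagonal]
    rw [hdg, bd_mul, bd_mul]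
    exact congrArg bd (funext fun c => spectral_decomp (hρ c))
  have hσdec : bd dσ = W * Matrix.diagonal (fun p => ((ν p : ℝ) : ℂ)) * star W := by
    rw [hW, bd_star]
    have hdg : Matrix.diagonal (fun p => ((ν p : ℝ) : ℂ)) =
        bd (fun c => Matrix.diagonal (fun i => (((hσ c).eigenvalues i : ℝ) : ℂ))) := by
      rw [bd_diagonal]
    rw [hdg, bd_mul, bd_mul]
    exact congrArg bd (funext fun c => spectral_decomp (hσ c))
  rw [gammaF_decomp F (bd_hermitian hρ) (bd_hermitian hσ) U W hUu hWu μ ν hρdec hσdec (bd da)]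
  set B : Fin 2 → Matrix (Fin n) (Fin n) ℂ := fun c => star (u c) * da c * w c with hB
  have hBd : star U * bd da * W = bd B := by
    rw [hU, hW, bd_star, bd_mul, bd_mul]
  rw [hBd]
  have hre : ∀ f : Fin (2*n) → ℝ, ∑ p, f p = ∑ z : Fin n × Fin 2, f ((eqv n).symm z) :=
    fun f => (Equiv.sum_comp (eqv n).symm f).symm
  have key : ∀ (i : Fin n) (c : Fin 2),
      (∑ q : Fin (2*n), F (μ ((eqv n).symm (i, c))) (ν q) *
        Complex.normSq (bd B ((eqv n).symm (i, c)) q)) =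
      ∑ j, F ((hρ c).eigenvalues i) ((hσ c).eigenvalues j) * Complex.normSq (B c i j) := by
    intro i c
    rw [hre, Fintype.sum_prod_type]
    have hterm : ∀ (j : Fin n) (c' : Fin 2),
        F (μ ((eqv n).symm (i, c))) (ν ((eqv n).symm (j, c'))) *
          Complex.normSq (bd B ((eqv n).symm (i, c)) ((eqv n).symm (j, c'))) =
        if c = c' then
          F ((hρ c).eigenvalues i) ((hσ c).eigenvalues j) * Complex.normSq (B c i j)
        else 0 := by
      intro j c'
      rw [bd_apply]
      simp only [hμ, hν, Equiv.apply_symm_apply]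
      by_cases h : c = c'
      · subst h; simp
      · simp [h]
    calc ∑ j, ∑ c', F (μ ((eqv n).symm (i, c))) (ν ((eqv n).symm (j, c'))) *
            Complex.normSq (bd B ((eqv n).symm (i, c)) ((eqv n).symm (j, c'))) =
        ∑ j, ∑ c' : Fin 2, if c = c' then
            F ((hρ c).eigenvalues i) ((hσ c).eigenvalues j) * Complex.normSq (B c i j)
          else 0 :=
          Finset.sum_congr rfl fun j _ => Finset.sum_congr rfl fun c' _ => hterm j c'
      _ = ∑ j, F ((hρ c).eigenvalues i) ((hσ c).eigenvalues j) * Complex.normSq (B c i j) := by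
          refine Finset.sum_congr rfl fun j _ => ?_
          rw [Finset.sum_ite_eq]
          simp
  calc ∑ p, ∑ q, F (μ p) (ν q) * Complex.normSq (bd B p q)
      = ∑ z : Fin n × Fin 2, ∑ q, F (μ ((eqv n).symm z)) (ν q) *
          Complex.normSq (bd B ((eqv n).symm z) q) :=
        hre _
    _ = ∑ i, ∑ c, ∑ q, F (μ ((eqv n).symm (i, c))) (ν q) *
          Complex.normSq (bd B ((eqv n).symm (i, c)) q) :=
        Fintype.sum_prod_type _
    _ = ∑ i, ∑ c, ∑ j, F ((hρ c).eigenvalues i) ((hσ c).eigenvalues j) *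
          Complex.normSq (B c i j) :=
        Finset.sum_congr rfl fun i _ => Finset.sum_congr rfl fun c _ => key i c
    _ = ∑ c, ∑ i, ∑ j, F ((hρ c).eigenvalues i) ((hσ c).eigenvalues j) *
          Complex.normSq (B c i j) := Finset.sum_comm
    _ = ∑ c, gammaF F (dρ c) (dσ c) (da c) := by
        refine Finset.sum_congr rfl fun c _ => ?_
        rw [gammaF_decomp F (hρ c) (hσ c) (u c) (w c)
          (hρ c).eigenvectorUnitary.2 (hσ c).eigenvectorUnitary.2
          (hρ c).eigenvalues (hσ c).eigenvalues
          (spectral_decomp (hρ c)) (spectral_decomp (hσ c)) (da c)]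

end Blocks

end GammaAux

open GammaAux in
/-- if `F : (0,∞)² → (0,∞)` satisfies the monotonicity
`β* Q_F^{β(ρ),β(σ)} β ≤ Q_F^{ρ,σ}` for all CPTP `β` and the homogeneity bound
`λF(λx,λy) ≤ F(x,y)` for `λ ∈ [0,1]`, then the generalized monotone metric
`γ^F_{ρ,σ}(a,a) = ⟨a, Q_F^{ρ,σ}(a)⟩_{HS}` is jointly convex in `(ρ, σ, a)`. -/
theorem gammaF_jointly_convex (F : ℝ → ℝ → ℝ)
    (hFpos : ∀ x ∈ Set.Ioi (0 : ℝ), ∀ y ∈ Set.Ioi (0 : ℝ), 0 < F x y)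
    (hmono : ∀ (n m : ℕ)
      (β : Matrix (Fin n) (Fin n) ℂ →ₗ[ℂ] Matrix (Fin m) (Fin m) ℂ),
      IsCPTP β →
      ∀ (ρ σ : Matrix (Fin n) (Fin n) ℂ), ρ.PosDef → σ.PosDef →
      ∀ y : Matrix (Fin n) (Fin n) ℂ,
        ((star (β y) * QF F (β ρ) (β σ) (β y)).trace).re ≤
          ((star y * QF F ρ σ y).trace).re)
    (hhom : ∀ lam ∈ Set.Icc (0 : ℝ) 1, ∀ x > (0 : ℝ), ∀ y > (0 : ℝ),
      lam * F (lam * x) (lam * y) ≤ F x y) :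
    ∀ (n : ℕ) (ρ₁ ρ₂ σ₁ σ₂ a₁ a₂ : Matrix (Fin n) (Fin n) ℂ),
      ρ₁.PosDef → ρ₂.PosDef → σ₁.PosDef → σ₂.PosDef →
      ∀ lam ∈ Set.Icc (0 : ℝ) 1,
        gammaF F ((lam : ℂ) • ρ₁ + ((1 - lam : ℝ) : ℂ) • ρ₂)
            ((lam : ℂ) • σ₁ + ((1 - lam : ℝ) : ℂ) • σ₂)
            ((lam : ℂ) • a₁ + ((1 - lam : ℝ) : ℂ) • a₂) ≤
          lam * gammaF F ρ₁ σ₁ a₁ + (1 - lam) * gammaF F ρ₂ σ₂ a₂ := by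
  intro n ρ₁ ρ₂ σ₁ σ₂ a₁ a₂ hρ₁ hρ₂ hσ₁ hσ₂ lam hlam
  obtain ⟨hl0, hl1⟩ := hlam
  by_cases hc0 : lam = 0
  · subst hc0
    norm_num
  by_cases hc1 : lam = 1
  · subst hc1
    norm_num
  have hl0' : 0 < lam := lt_of_le_of_ne hl0 (Ne.symm hc0)
  have hmu0' : 0 < 1 - lam := by
    rcases lt_or_eq_of_le hl1 with h | h
    · linarith
    · exact absurd h hc1
  have hmu0 : 0 ≤ 1 - lam := le_of_lt hmu0'
  have hmu1 : 1 - lam ≤ 1 := by linarith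
  set dρ : Fin 2 → Matrix (Fin n) (Fin n) ℂ :=
    ![(lam : ℂ) • ρ₁, ((1 - lam : ℝ) : ℂ) • ρ₂] with hdρ
  set dσ : Fin 2 → Matrix (Fin n) (Fin n) ℂ :=
    ![(lam : ℂ) • σ₁, ((1 - lam : ℝ) : ℂ) • σ₂] with hdσ
  set da : Fin 2 → Matrix (Fin n) (Fin n) ℂ :=
    ![(lam : ℂ) • a₁, ((1 - lam : ℝ) : ℂ) • a₂] with hda
  have e0ρ : dρ 0 = (lam : ℂ) • ρ₁ := rfl
  have e1ρ : dρ 1 = ((1 - lam : ℝ) : ℂ) • ρ₂ := rfl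
  have e0σ : dσ 0 = (lam : ℂ) • σ₁ := rfl
  have e1σ : dσ 1 = ((1 - lam : ℝ) : ℂ) • σ₂ := rfl
  have e0a : da 0 = (lam : ℂ) • a₁ := rfl
  have e1a : da 1 = ((1 - lam : ℝ) : ℂ) • a₂ := rfl
  have hPDρ : ∀ c, (dρ c).PosDef := by
    rw [Fin.forall_fin_two]
    exact ⟨posDef_smul hρ₁ hl0', posDef_smul hρ₂ hmu0'⟩
  have hPDσ : ∀ c, (dσ c).PosDef := by
    rw [Fin.forall_fin_two]
    exact ⟨posDef_smul hσ₁ hl0', posDef_smul hσ₂ hmu0'⟩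
  have hm := hmono (2*n) n (beta n) isCPTP_beta (bd dρ) (bd dσ)
    (posDef_bd hPDρ) (posDef_bd hPDσ) (bd da)
  rw [beta_bd, beta_bd, beta_bd, e0ρ, e1ρ, e0σ, e1σ, e0a, e1a] at hm
  calc gammaF F ((lam : ℂ) • ρ₁ + ((1 - lam : ℝ) : ℂ) • ρ₂)
        ((lam : ℂ) • σ₁ + ((1 - lam : ℝ) : ℂ) • σ₂)
        ((lam : ℂ) • a₁ + ((1 - lam : ℝ) : ℂ) • a₂)
      ≤ ((star (bd da) * QF F (bd dρ) (bd dσ) (bd da)).trace).re := hm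
    _ = gammaF F (bd dρ) (bd dσ) (bd da) := rfl
    _ = ∑ c, gammaF F (dρ c) (dσ c) (da c) :=
        gammaF_bd F dρ dσ da (fun c => (hPDρ c).1) (fun c => (hPDσ c).1)
    _ = gammaF F (dρ 0) (dσ 0) (da 0) + gammaF F (dρ 1) (dσ 1) (da 1) :=
        Fin.sum_univ_two _
    _ ≤ lam * gammaF F ρ₁ σ₁ a₁ + (1 - lam) * gammaF F ρ₂ σ₂ a₂ := by
        rw [e0ρ, e1ρ, e0σ, e1σ, e0a, e1a]
        exact add_le_add (gammaF_smul_le F hhom hl0 hl1 hρ₁ hσ₁ a₁)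
          (gammaF_smul_le F hhom hmu0 hmu1 hρ₂ hσ₂ a₂)
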